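/- For λ ≥ 0 let r_λ ≥ 0 solve sinh(2r_λ)/(2r_λ) = λ+1 (with r_0 = 0). Then as λ → 0⁺, r_λ = sqrt(3λ/2) + O(λ^{3/2}), and consequently the area A(H_λ) = r_λ·λ·cosh(r_λ)/sinh(r_λ)^3 converges to 2/3 as λ → 0⁺. -/

import Mathlib

open Real Filter Asymptotics

/-- helper: a function vanishing at `0` with nonnegative derivative on `(0,∞)`
is nonnegative on `[0,∞)`. -/
lemma aux_nonneg_of_deriv (f f' : ℝ → ℝ) (hd : ∀ x, HasDerivAt f (f' x) x)
    (h0 : f 0 = 0) (hf' : ∀ x, 0 < x → 0 ≤ f' x) : ∀ x, 0 ≤ x → 0 ≤ f x := by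
  intro x hx
  have hm : MonotoneOn f (Set.Ici 0) := by
    apply monotoneOn_of_deriv_nonneg (convex_Ici 0)
    · exact fun y _ => (hd y).continuousAt.continuousWithinAt
    · exact fun y _ => (hd y).differentiableAt.differentiableWithinAt
    · intro y hy
      rw [interior_Ici] at hy
      rw [(hd y).deriv]
      exact hf' y hy
  have := hm (Set.self_mem_Ici) hx hx
  rwa [h0] at this

lemma aux_sinh_le_mul_cosh : ∀ x : ℝ, 0 ≤ x → Real.sinh x ≤ x * Real.cosh x := by
  intro x hx
  have h : 0 ≤ x * Real.cosh x - Real.sinh x := by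
    refine aux_nonneg_of_deriv (fun y => y * Real.cosh y - Real.sinh y)
      (fun y => y * Real.sinh y) ?_ (by simp) ?_ x hx
    · intro y
      have H := ((hasDerivAt_id y).mul (Real.hasDerivAt_cosh y)).sub (Real.hasDerivAt_sinh y)
      refine H.congr_deriv ?_
      simp only [id_eq]
      ring
    · intro y hy
      exact mul_nonneg hy.le (Real.sinh_nonneg_iff.2 hy.le)
  linarith

lemma aux_quadratic_le_cosh : ∀ x : ℝ, 0 ≤ x → 1 + x ^ 2 / 2 ≤ Real.cosh x := by
  intro x hx
  have h : 0 ≤ Real.cosh x - (1 + x ^ 2 / 2) := by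
    refine aux_nonneg_of_deriv (fun y => Real.cosh y - (1 + y ^ 2 / 2))
      (fun y => Real.sinh y - y) ?_ (by simp) ?_ x hx
    · intro y
      have H := (Real.hasDerivAt_cosh y).sub
        ((hasDerivAt_const y (1:ℝ)).add ((hasDerivAt_pow 2 y).div_const 2))
      refine H.congr_deriv ?_
      push_cast; ring
    · intro y hy
      have : y ≤ Real.sinh y := Real.self_le_sinh_iff.2 hy.le
      beta_reduce
      linarith
  linarith

lemma aux_cubic_le_sinh : ∀ x : ℝ, 0 ≤ x → x + x ^ 3 / 6 ≤ Real.sinh x := by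
  intro x hx
  have h : 0 ≤ Real.sinh x - (x + x ^ 3 / 6) := by
    refine aux_nonneg_of_deriv (fun y => Real.sinh y - (y + y ^ 3 / 6))
      (fun y => Real.cosh y - (1 + y ^ 2 / 2)) ?_ (by simp) ?_ x hx
    · intro y
      have H := (Real.hasDerivAt_sinh y).sub
        ((hasDerivAt_id y).add ((hasDerivAt_pow 3 y).div_const 6))
      refine H.congr_deriv ?_
      push_cast; ring
    · intro y hy
      have := aux_quadratic_le_cosh y hy.le
      beta_reduce
      linarith
  linarith

lemma aux_cosh_le : ∀ x : ℝ, 0 ≤ x → Real.cosh x ≤ 1 + x ^ 2 / 2 * Real.cosh x := by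
  intro x hx
  have h : 0 ≤ 1 + x ^ 2 / 2 * Real.cosh x - Real.cosh x := by
    refine aux_nonneg_of_deriv (fun y => 1 + y ^ 2 / 2 * Real.cosh y - Real.cosh y)
      (fun y => y * Real.cosh y + y ^ 2 / 2 * Real.sinh y - Real.sinh y) ?_ (by simp) ?_ x hx
    · intro y
      have H := ((hasDerivAt_const y (1:ℝ)).add
        (((hasDerivAt_pow 2 y).div_const 2).mul (Real.hasDerivAt_cosh y))).sub
        (Real.hasDerivAt_cosh y)
      refine H.congr_deriv ?_
      push_cast; ring
    · intro y hy
      have h1 := aux_sinh_le_mul_cosh y hy.le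
      have h2 : 0 ≤ y ^ 2 / 2 * Real.sinh y := by
        have := Real.sinh_nonneg_iff.2 hy.le
        positivity
      beta_reduce
      linarith
  linarith

lemma aux_sinh_le_cubic : ∀ x : ℝ, 0 ≤ x →
    Real.sinh x ≤ x + x ^ 3 / 6 * Real.cosh x := by
  intro x hx
  have h : 0 ≤ x + x ^ 3 / 6 * Real.cosh x - Real.sinh x := by
    refine aux_nonneg_of_deriv (fun y => y + y ^ 3 / 6 * Real.cosh y - Real.sinh y)
      (fun y => 1 + y ^ 2 / 2 * Real.cosh y + y ^ 3 / 6 * Real.sinh y - Real.cosh y)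
      ?_ (by simp) ?_ x hx
    · intro y
      have H := (((hasDerivAt_id y).add
        (((hasDerivAt_pow 3 y).div_const 6).mul (Real.hasDerivAt_cosh y)))).sub
        (Real.hasDerivAt_sinh y)
      refine H.congr_deriv ?_
      push_cast; ring
    · intro y hy
      have h1 := aux_cosh_le y hy.le
      have h2 : 0 ≤ y ^ 3 / 6 * Real.sinh y := by
        have := Real.sinh_nonneg_iff.2 hy.le
        positivity
      beta_reduce
      linarith
  linarith

theorem r_lambda_asymptotics_and_area_limit (r : ℝ → ℝ)
    (hr : ∀ l : ℝ, 0 < l → 0 < r l ∧ Real.sinh (2 * r l) / (2 * r l) = l + 1)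
    (hr0 : r 0 = 0) :
    (fun l : ℝ => r l - Real.sqrt (3 * l / 2)) =O[nhdsWithin 0 (Set.Ioi 0)]
      (fun l : ℝ => l ^ ((3:ℝ)/2)) ∧
    Filter.Tendsto (fun l : ℝ => r l * l * Real.cosh (r l) / Real.sinh (r l) ^ 3)
      (nhdsWithin 0 (Set.Ioi 0)) (nhds (2/3)) := by
  -- key two-sided estimates
  have key : ∀ l : ℝ, 0 < l →
      (r l) ^ 2 ≤ 3 * l / 2 ∧ 3 * l / 2 ≤ (r l) ^ 2 * Real.cosh (2 * r l) := by
    intro l hl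
    obtain ⟨hR, heq⟩ := hr l hl
    have h2R : (0:ℝ) < 2 * r l := by linarith
    have hs : Real.sinh (2 * r l) = 2 * r l * (l + 1) := by
      field_simp at heq; linarith
    have h1 := aux_cubic_le_sinh (2 * r l) h2R.le
    have h2 := aux_sinh_le_cubic (2 * r l) h2R.le
    constructor
    · nlinarith
    · nlinarith
  have hroot : ∀ l : ℝ, 0 < l → r l ≤ Real.sqrt (3 * l / 2) := by
    intro l hl
    exact (Real.le_sqrt (hr l hl).1.le (by linarith)).2 (key l hl).1
  have hev : ∀ᶠ l in nhdsWithin (0:ℝ) (Set.Ioi 0), 0 < l := self_mem_nhdsWithin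
  -- r tends to 0
  have hsq0 : Tendsto (fun l : ℝ => Real.sqrt (3 * l / 2)) (nhdsWithin 0 (Set.Ioi 0)) (nhds 0) := by
    have hc : Continuous (fun l : ℝ => Real.sqrt (3 * l / 2)) := by
      exact Real.continuous_sqrt.comp (by continuity)
    have := (hc.tendsto 0).mono_left (nhdsWithin_le_nhds (s := Set.Ioi 0))
    simp only [mul_zero, zero_div, Real.sqrt_zero] at this
    exact this
  have hRt : Tendsto (fun l : ℝ => r l) (nhdsWithin 0 (Set.Ioi 0)) (nhds 0) := by
    refine tendsto_of_tendsto_of_tendsto_of_le_of_le' tendsto_const_nhds hsq0 ?_ ?_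
    · exact hev.mono fun l hl => (hr l hl).1.le
    · exact hev.mono fun l hl => hroot l hl
  have h2Rt : Tendsto (fun l : ℝ => 2 * r l) (nhdsWithin 0 (Set.Ioi 0)) (nhds 0) := by
    simpa using hRt.const_mul 2
  have hcosh2t : Tendsto (fun l : ℝ => Real.cosh (2 * r l))
      (nhdsWithin 0 (Set.Ioi 0)) (nhds 1) := by
    have := (Real.continuous_cosh.tendsto 0).comp h2Rt
    simpa [Function.comp_def] using this
  have hcoshRt : Tendsto (fun l : ℝ => Real.cosh (r l))
      (nhdsWithin 0 (Set.Ioi 0)) (nhds 1) := by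
    have := (Real.continuous_cosh.tendsto 0).comp hRt
    simpa [Function.comp_def] using this
  constructor
  · -- Big-O part
    rw [isBigO_iff]
    refine ⟨9, ?_⟩
    have hmem : Set.Ioo (0:ℝ) (1/100) ∈ nhdsWithin (0:ℝ) (Set.Ioi 0) :=
      Ioo_mem_nhdsGT_of_mem (by constructor <;> norm_num)
    filter_upwards [hmem] with l hl
    obtain ⟨hl0, hl1⟩ := hl
    obtain ⟨hk1, hk2⟩ := key l hl0
    have hR := (hr l hl0).1
    -- r l ≤ 1/2
    have hRhalf : r l ≤ 1/2 := by nlinarith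
    -- cosh (2 * r l) ≤ 2
    have hcosh2 : Real.cosh (2 * r l) ≤ 2 := by
      have h1 : Real.cosh (2 * r l) ≤ Real.cosh 1 := by
        rw [Real.cosh_le_cosh]
        rw [abs_of_nonneg (by linarith), abs_of_nonneg (by norm_num)]
        linarith
      have h2 : Real.cosh 1 < 2 := by
        rw [Real.cosh_eq]
        have he := Real.exp_one_lt_d9
        have he2 : Real.exp (-1) ≤ 1 := by
          rw [Real.exp_le_one_iff]; norm_num
        linarith
      linarith
    -- cosh (2 r) - 1 ≤ 2 r² cosh(2r) ≤ 4 r² ≤ 6 l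
    have hc1 : Real.cosh (2 * r l) - 1 ≤ 6 * l := by
      have := aux_cosh_le (2 * r l) (by linarith)
      nlinarith
    -- 3l/2 - r² ≤ 9 l²
    have hgap : 3 * l / 2 - (r l) ^ 2 ≤ 9 * l ^ 2 := by nlinarith
    set s := Real.sqrt (3 * l / 2) with hs
    have hs2 : s ^ 2 = 3 * l / 2 := Real.sq_sqrt (by linarith)
    set t := Real.sqrt l with ht
    have ht2 : t ^ 2 = l := Real.sq_sqrt hl0.le
    have htpos : 0 < t := Real.sqrt_pos.2 hl0
    have hts : t ≤ s := by
      apply Real.sqrt_le_sqrt; linarith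
    have hRs : r l ≤ s := hroot l hl0
    have hl32 : l ^ ((3:ℝ)/2) = t ^ 3 := by
      rw [ht, Real.sqrt_eq_rpow, ← Real.rpow_natCast (l ^ ((1:ℝ)/2)) 3,
        ← Real.rpow_mul hl0.le]
      norm_num
    -- (s - r l) * s ≤ s² - r² ≤ 9 l² = 9 t⁴, and t ≤ s so s - r l ≤ 9 t³
    have hfin : s - r l ≤ 9 * t ^ 3 := by
      have h1 : (s - r l) * s ≤ 9 * t ^ 2 * t ^ 2 := by nlinarith
      nlinarith [mul_le_mul_of_nonneg_left hts (by linarith : (0:ℝ) ≤ s - r l)]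
    rw [Real.norm_eq_abs, Real.norm_eq_abs, abs_of_nonpos (by linarith), hl32,
      abs_of_nonneg (by positivity)]
    linarith
  · -- limit part
    have hquot : Tendsto (fun l : ℝ => l / (r l) ^ 2)
        (nhdsWithin 0 (Set.Ioi 0)) (nhds (2/3)) := by
      have hupper : Tendsto (fun l : ℝ => 2/3 * Real.cosh (2 * r l))
          (nhdsWithin 0 (Set.Ioi 0)) (nhds (2/3)) := by
        simpa using hcosh2t.const_mul (2/3 : ℝ)
      refine tendsto_of_tendsto_of_tendsto_of_le_of_le' tendsto_const_nhds hupper ?_ ?_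
      · filter_upwards [hev] with l hl
        have hR := (hr l hl).1
        rw [le_div_iff₀ (by positivity)]
        have := (key l hl).1
        linarith
      · filter_upwards [hev] with l hl
        have hR := (hr l hl).1
        rw [div_le_iff₀ (by positivity)]
        have := (key l hl).2
        nlinarith
    have hratio : Tendsto (fun l : ℝ => r l / Real.sinh (r l))
        (nhdsWithin 0 (Set.Ioi 0)) (nhds 1) := by
      have hlowfn : Tendsto (fun l : ℝ => 1 / Real.cosh (r l))
          (nhdsWithin 0 (Set.Ioi 0)) (nhds 1) := by
        have h := Filter.Tendsto.div
          (tendsto_const_nhds : Tendsto (fun _ : ℝ => (1:ℝ)) (nhdsWithin 0 (Set.Ioi 0)) (nhds 1))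
          hcoshRt one_ne_zero
        simpa only [Pi.div_def, one_div_one] using h
      refine tendsto_of_tendsto_of_tendsto_of_le_of_le' hlowfn tendsto_const_nhds ?_ ?_
      · filter_upwards [hev] with l hl
        have hR := (hr l hl).1
        have hsinh : 0 < Real.sinh (r l) := Real.sinh_pos_iff.2 hR
        have hcosh : 0 < Real.cosh (r l) := Real.cosh_pos (r l)
        rw [div_le_div_iff₀ hcosh hsinh]
        have := aux_sinh_le_mul_cosh (r l) hR.le
        linarith
      · filter_upwards [hev] with l hl
        have hR := (hr l hl).1
        have hsinh : 0 < Real.sinh (r l) := Real.sinh_pos_iff.2 hR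
        rw [div_le_one hsinh]
        exact Real.self_le_sinh_iff.2 hR.le
    have hprod : Tendsto
        (fun l : ℝ => l / (r l) ^ 2 * (r l / Real.sinh (r l)) ^ 3 * Real.cosh (r l))
        (nhdsWithin 0 (Set.Ioi 0)) (nhds (2/3)) := by
      have := (hquot.mul (hratio.pow 3)).mul hcoshRt
      simpa using this
    refine Filter.Tendsto.congr' ?_ hprod
    filter_upwards [hev] with l hl
    have hR := (hr l hl).1
    have hsinh : 0 < Real.sinh (r l) := Real.sinh_pos_iff.2 hR
    field_simp
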